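/- For all real z > 0, the Digamma function ψ satisfies the lower bound ψ(z + 1/2) − ψ(z) > 1/(2z). -/

import Mathlib

open Real MeasureTheory Set Filter

noncomputable def digamma (z : ℝ) : ℝ := deriv Real.Gamma z / Real.Gamma z

lemma hasDerivAt_logGamma {z : ℝ} (hz : 0 < z) :
    HasDerivAt (fun x => Real.log (Real.Gamma x)) (digamma z) z := by
  have hd : DifferentiableAt ℝ Real.Gamma z :=
    Real.differentiableAt_Gamma (fun m => by
      have : (0:ℝ) ≤ m := Nat.cast_nonneg m
      intro h; rw [h] at hz; linarith)
  have hG : Real.Gamma z ≠ 0 := (Real.Gamma_pos_of_pos hz).ne'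
  simpa [digamma] using hd.hasDerivAt.log hG

lemma digamma_mono {a b : ℝ} (ha : 0 < a) (hab : a < b) : digamma a ≤ digamma b := by
  have hb : 0 < b := ha.trans hab
  have h1 := Real.convexOn_log_Gamma.le_slope_of_hasDerivAt (mem_Ioi.2 ha) (mem_Ioi.2 hb)
    hab (by simpa [Function.comp_def] using hasDerivAt_logGamma ha)
  have h2 := Real.convexOn_log_Gamma.slope_le_of_hasDerivAt (mem_Ioi.2 ha) (mem_Ioi.2 hb)
    hab (by simpa [Function.comp_def] using hasDerivAt_logGamma hb)
  exact h1.trans h2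

lemma digamma_add_one {z : ℝ} (hz : 0 < z) : digamma (z + 1) = digamma z + 1 / z := by
  have hd : DifferentiableAt ℝ Real.Gamma z :=
    Real.differentiableAt_Gamma (fun m => by
      have : (0:ℝ) ≤ m := Nat.cast_nonneg m
      intro h; rw [h] at hz; linarith)
  have hG : 0 < Real.Gamma z := Real.Gamma_pos_of_pos hz
  have h1 : HasDerivAt (fun x => Real.Gamma (x + 1)) (deriv Real.Gamma (z + 1)) z := by
    have hd1 : DifferentiableAt ℝ Real.Gamma (z + 1) :=
      Real.differentiableAt_Gamma (fun m => by
        have : (0:ℝ) ≤ m := Nat.cast_nonneg m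
        intro h; linarith)
    exact (hd1.hasDerivAt.comp z ((hasDerivAt_id z).add_const 1)).congr_deriv (by ring)
  have h2 : HasDerivAt (fun x => x * Real.Gamma x)
      (1 * Real.Gamma z + z * deriv Real.Gamma z) z :=
    (hasDerivAt_id z).mul hd.hasDerivAt
  have heq : (fun x => Real.Gamma (x + 1)) =ᶠ[nhds z] fun x => x * Real.Gamma x := by
    filter_upwards [eventually_gt_nhds hz] with x hx
    exact Real.Gamma_add_one hx.ne'
  have h3 : deriv Real.Gamma (z + 1) = Real.Gamma z + z * deriv Real.Gamma z := by
    have := (h2.congr_of_eventuallyEq heq).unique h1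
    linarith [this]
  have hG1 : Real.Gamma (z + 1) = z * Real.Gamma z := Real.Gamma_add_one hz.ne'
  rw [digamma, digamma, h3, hG1]
  field_simp
  ring

noncomputable def hInt (z : ℝ) : ℝ :=
  ∫ t in Ioi (0:ℝ), Real.exp (-z * t) / (1 + Real.exp (-(t/2)))

lemma hInt_cont (z : ℝ) :
    Continuous (fun t : ℝ => Real.exp (-z * t) / (1 + Real.exp (-(t/2)))) := by
  apply Continuous.div
  · fun_prop
  · fun_prop
  · intro t
    positivity

lemma one_le_denom (t : ℝ) : (1:ℝ) ≤ 1 + Real.exp (-(t/2)) :=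
  le_add_of_nonneg_right (Real.exp_nonneg _)

lemma hInt_integrable {z : ℝ} (hz : 0 < z) :
    IntegrableOn (fun t : ℝ => Real.exp (-z * t) / (1 + Real.exp (-(t/2)))) (Ioi 0) := by
  apply Integrable.mono (exp_neg_integrableOn_Ioi 0 hz)
    ((hInt_cont z).aestronglyMeasurable.restrict)
  filter_upwards with t
  rw [Real.norm_eq_abs, Real.norm_eq_abs, abs_of_nonneg (by positivity),
    abs_of_nonneg (Real.exp_nonneg _)]
  calc Real.exp (-z * t) / (1 + Real.exp (-(t/2))) ≤ Real.exp (-z * t) / 1 :=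
        div_le_div_of_nonneg_left (Real.exp_nonneg _) one_pos (one_le_denom t)
    _ = Real.exp (-z * t) := div_one _

lemma integral_exp_neg_mul' {z : ℝ} (hz : 0 < z) :
    ∫ t in Ioi (0:ℝ), Real.exp (-z * t) = 1 / z := by
  have hderiv : ∀ t ∈ Ici (0:ℝ),
      HasDerivAt (fun t => -Real.exp (-z * t) / z) (Real.exp (-z * t)) t := by
    intro t _
    have h1 : HasDerivAt (fun t : ℝ => -z * t) (-z) t := by
      simpa using (hasDerivAt_id t).const_mul (-z)
    have h2 := (h1.exp).neg.div_const z
    refine h2.congr_deriv ?_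
    rw [div_eq_iff hz.ne']; ring
  have htend : Tendsto (fun t : ℝ => -Real.exp (-z * t) / z) atTop (nhds 0) := by
    have h1 : Tendsto (fun t : ℝ => z * t) atTop atTop :=
      Tendsto.const_mul_atTop hz tendsto_id
    have h1' : Tendsto (fun t : ℝ => -(z * t)) atTop atBot := tendsto_neg_atBot_iff.mpr h1
    have h2 : Tendsto (fun t : ℝ => Real.exp (-z * t)) atTop (nhds 0) := by
      have := Real.tendsto_exp_atBot.comp h1'
      simpa only [Function.comp_def, neg_mul] using this
    simpa using (h2.neg).div_const z
  have key := integral_Ioi_of_hasDerivAt_of_tendsto' hderiv (exp_neg_integrableOn_Ioi 0 hz) htend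
  rw [key, mul_zero, Real.exp_zero]
  ring

lemma hInt_nonneg {z : ℝ} (hz : 0 < z) : 0 ≤ hInt z := by
  apply setIntegral_nonneg measurableSet_Ioi
  intro t _
  positivity

lemma hInt_le {z : ℝ} (hz : 0 < z) : hInt z ≤ 1 / z := by
  rw [← integral_exp_neg_mul' hz]
  apply setIntegral_mono_on (hInt_integrable hz) (exp_neg_integrableOn_Ioi 0 hz)
    measurableSet_Ioi
  intro t _
  calc Real.exp (-z * t) / (1 + Real.exp (-(t/2))) ≤ Real.exp (-z * t) / 1 :=
        div_le_div_of_nonneg_left (Real.exp_nonneg _) one_pos (one_le_denom t)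
    _ = Real.exp (-z * t) := div_one _

lemma hInt_add {z : ℝ} (hz : 0 < z) : hInt z + hInt (z + 1/2) = 1 / z := by
  rw [hInt, hInt, ← integral_add (hInt_integrable hz) (hInt_integrable (by linarith)),
    ← integral_exp_neg_mul' hz]
  apply setIntegral_congr_fun measurableSet_Ioi
  intro t _
  have hd : (0:ℝ) < 1 + Real.exp (-(t/2)) := by positivity
  have he : Real.exp (-(z + 1/2) * t) = Real.exp (-z * t) * Real.exp (-(t/2)) := by
    rw [← Real.exp_add]; ring_nf
  have hsum : Real.exp (-z * t) + Real.exp (-z * t) * Real.exp (-(t/2))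
      = Real.exp (-z * t) * (1 + Real.exp (-(t/2))) := by ring
  show Real.exp (-z * t) / (1 + Real.exp (-(t/2)))
      + Real.exp (-(z + 1/2) * t) / (1 + Real.exp (-(t/2))) = Real.exp (-z * t)
  rw [← add_div, he, hsum, mul_div_assoc, div_self hd.ne', mul_one]

lemma hInt_gt {z : ℝ} (hz : 0 < z) : 1 / (2 * z) < hInt z := by
  have hhalf : ∫ t in Ioi (0:ℝ), Real.exp (-z * t) / 2 = 1 / (2 * z) := by
    rw [integral_div, integral_exp_neg_mul' hz]
    ring
  have hint2 : IntegrableOn (fun t : ℝ => Real.exp (-z * t) / 2) (Ioi 0) :=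
    (exp_neg_integrableOn_Ioi 0 hz).div_const 2
  set G : ℝ → ℝ := fun t =>
    Real.exp (-z * t) / (1 + Real.exp (-(t/2))) - Real.exp (-z * t) / 2 with hG
  have hGpos : ∀ t ∈ Ioi (0:ℝ), 0 < G t := by
    intro t ht
    have h1 : Real.exp (-(t/2)) < 1 := by
      rw [Real.exp_lt_one_iff]
      simp only [mem_Ioi] at ht
      linarith
    have h2 : (0:ℝ) < 1 + Real.exp (-(t/2)) := by positivity
    have h3 : Real.exp (-z * t) / 2 < Real.exp (-z * t) / (1 + Real.exp (-(t/2))) :=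
      div_lt_div_of_pos_left (Real.exp_pos _) h2 (by linarith)
    simp only [hG]
    linarith
  have hpos : 0 < ∫ t in Ioi (0:ℝ), G t := by
    rw [setIntegral_pos_iff_support_of_nonneg_ae]
    · have hsub : Ioi (0:ℝ) ⊆ Function.support G ∩ Ioi 0 :=
        fun t ht => ⟨(hGpos t ht).ne', ht⟩
      calc (0:ENNReal) < volume (Ioi (0:ℝ)) := by
              rw [Real.volume_Ioi]; exact ENNReal.zero_lt_top
        _ ≤ volume (Function.support G ∩ Ioi 0) := measure_mono hsub
    · filter_upwards [ae_restrict_mem measurableSet_Ioi] with t ht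
      exact (hGpos t ht).le
    · exact (hInt_integrable hz).sub hint2
  have := integral_sub (hInt_integrable hz) hint2
  simp only [hG] at hpos ⊢
  rw [this, hhalf] at hpos
  have heq : hInt z = ∫ t in Ioi (0:ℝ), Real.exp (-z * t) / (1 + Real.exp (-(t/2))) := rfl
  linarith [hpos]


noncomputable def gFun (w : ℝ) : ℝ := digamma (w + 1/2) - digamma w

noncomputable def FFun (w : ℝ) : ℝ := gFun w - hInt w

lemma gFun_nonneg {w : ℝ} (hw : 0 < w) : 0 ≤ gFun w :=
  sub_nonneg.2 (digamma_mono hw (by linarith))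

lemma gFun_le {w : ℝ} (hw : 0 < w) : gFun w ≤ 1 / w := by
  have h1 : digamma (w + 1/2) ≤ digamma (w + 1) := digamma_mono (by linarith) (by linarith)
  have h2 := digamma_add_one hw
  rw [gFun]
  linarith

lemma gFun_add {w : ℝ} (hw : 0 < w) : gFun w + gFun (w + 1/2) = 1 / w := by
  have h2 := digamma_add_one hw
  rw [gFun, gFun, show w + 1/2 + 1/2 = w + 1 by ring]
  linarith

lemma FFun_add {w : ℝ} (hw : 0 < w) : FFun w + FFun (w + 1/2) = 0 := by
  have h1 := gFun_add hw
  have h2 := hInt_add hw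
  rw [FFun, FFun]
  linarith

lemma FFun_per {w : ℝ} (hw : 0 < w) : FFun (w + 1) = FFun w := by
  have h1 := FFun_add hw
  have h2 := FFun_add (show (0:ℝ) < w + 1/2 by linarith)
  rw [show w + 1/2 + 1/2 = w + 1 by ring] at h2
  linarith

lemma FFun_bound {w : ℝ} (hw : 0 < w) : |FFun w| ≤ 2 / w := by
  have h1 := gFun_nonneg hw
  have h2 := gFun_le hw
  have h3 := hInt_nonneg hw
  have h4 := hInt_le hw
  have h5 : (1:ℝ)/w ≤ 2/w := by gcongr <;> norm_num
  rw [abs_le, FFun]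
  constructor <;> linarith

lemma FFun_shift {w : ℝ} (hw : 0 < w) (n : ℕ) : FFun (w + n) = FFun w := by
  induction n with
  | zero => simp
  | succ n ih =>
    have hzn : 0 < w + n := by positivity
    push_cast
    rw [show w + ((n:ℝ) + 1) = (w + n) + 1 by ring, FFun_per hzn, ih]

lemma FFun_zero {w : ℝ} (hw : 0 < w) : FFun w = 0 := by
  by_contra h
  have habs : 0 < |FFun w| := abs_pos.2 h
  obtain ⟨n, hn⟩ := exists_nat_gt (2 / |FFun w| - w)
  have hzn : 0 < w + n := by positivity
  have hb := FFun_bound hzn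
  rw [FFun_shift hw n] at hb
  have h2 : 2 / (w + n) < |FFun w| := by
    rw [div_lt_iff₀ hzn]
    have h3 : 2 / |FFun w| < w + n := by linarith
    calc (2:ℝ) = |FFun w| * (2 / |FFun w|) := by field_simp
      _ < |FFun w| * (w + n) := mul_lt_mul_of_pos_left h3 habs
  linarith

theorem digamma_lower_bound (z : ℝ) (hz : 0 < z) :
    digamma (z + 1/2) - digamma z > 1 / (2 * z) := by
  have h0 := FFun_zero hz
  rw [FFun, gFun] at h0
  have hfin := hInt_gt hz
  linarith
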